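/- Let η be a block-diagonal invertible symmetric real n×n matrix η = diag(η₁, η₂) with η₁ a symmetric invertible k×k block and η₂ a symmetric invertible m×m block (k + m = n), and let θ = diag(0, θ₂) be the block-diagonal antisymmetric n×n matrix whose only nonzero block is an invertible antisymmetric m×m matrix θ₂. Then every real n×n matrix λ satisfying λ η + η λᵀ = 0 and λ θ + θ λᵀ = 0 is block diagonal, λ = diag(λ₁, λ₂), with λ₁ η₁ + η₁ λ₁ᵀ = 0 and λ₂ η₂ + η₂ λ₂ᵀ = 0, λ₂ θ₂ + θ₂ λ₂ᵀ = 0. Consequently the Lie algebra of all such λ (with commutator bracket) is isomorphic to the direct sum of the Lie algebra {λ₁ : λ₁ η₁ + η₁ λ₁ᵀ = 0} and the Lie algebra {λ₂ : λ₂ η₂ + η₂ λ₂ᵀ = 0 and λ₂ θ₂ + θ₂ λ₂ᵀ = 0}. -/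

import Mathlib

open Matrix

attribute [local instance 100] LieRing.ofAssociativeRing

@[simp] private lemma toBlocks₁₁_zero' {k m : ℕ} :
    (0 : Matrix (Fin k ⊕ Fin m) (Fin k ⊕ Fin m) ℝ).toBlocks₁₁ = 0 := rfl
@[simp] private lemma toBlocks₁₂_zero' {k m : ℕ} :
    (0 : Matrix (Fin k ⊕ Fin m) (Fin k ⊕ Fin m) ℝ).toBlocks₁₂ = 0 := rfl
@[simp] private lemma toBlocks₂₂_zero' {k m : ℕ} :
    (0 : Matrix (Fin k ⊕ Fin m) (Fin k ⊕ Fin m) ℝ).toBlocks₂₂ = 0 := rfl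

private lemma fromBlocks_sub' {k m : ℕ} (A A' : Matrix (Fin k) (Fin k) ℝ)
    (B B' : Matrix (Fin k) (Fin m) ℝ) (C C' : Matrix (Fin m) (Fin k) ℝ)
    (D D' : Matrix (Fin m) (Fin m) ℝ) :
    Matrix.fromBlocks A B C D - Matrix.fromBlocks A' B' C' D'
      = Matrix.fromBlocks (A - A') (B - B') (C - C') (D - D') := by
  ext (i | i) (j | j) <;> simp [Matrix.fromBlocks]

set_option synthInstance.maxHeartbeats 1000000 in
set_option maxHeartbeats 1000000 in
/-- For block diagonal `η = diag(η₁, η₂)` (invertible symmetric blocks) and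
`θ = diag(0, θ₂)` (with `θ₂` invertible antisymmetric), every `λ` with `λ η + η λᵀ = 0`
and `λ θ + θ λᵀ = 0` is block diagonal `λ = diag(λ₁, λ₂)` with `λ₁` infinitesimally
preserving `η₁`, and `λ₂` infinitesimally preserving `η₂` and `θ₂`; consequently the Lie
algebra of all such `λ` is isomorphic to the direct sum of the corresponding two Lie
algebras. -/
theorem stmt_15 (k m : ℕ)
    (η₁ : Matrix (Fin k) (Fin k) ℝ) (hη₁symm : η₁ᵀ = η₁) (hη₁inv : IsUnit η₁)
    (η₂ : Matrix (Fin m) (Fin m) ℝ) (hη₂symm : η₂ᵀ = η₂) (hη₂inv : IsUnit η₂)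
    (θ₂ : Matrix (Fin m) (Fin m) ℝ) (hθ₂anti : θ₂ᵀ = -θ₂) (hθ₂inv : IsUnit θ₂)
    (η θ : Matrix (Fin k ⊕ Fin m) (Fin k ⊕ Fin m) ℝ)
    (hη : η = Matrix.fromBlocks η₁ 0 0 η₂)
    (hθ : θ = Matrix.fromBlocks 0 0 0 θ₂)
    (g : LieSubalgebra ℝ (Matrix (Fin k ⊕ Fin m) (Fin k ⊕ Fin m) ℝ))
    (hg : ∀ A, A ∈ g ↔ (A * η + η * Aᵀ = 0 ∧ A * θ + θ * Aᵀ = 0))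
    (g₁ : LieSubalgebra ℝ (Matrix (Fin k) (Fin k) ℝ))
    (hg₁ : ∀ B, B ∈ g₁ ↔ B * η₁ + η₁ * Bᵀ = 0)
    (g₂ : LieSubalgebra ℝ (Matrix (Fin m) (Fin m) ℝ))
    (hg₂ : ∀ C, C ∈ g₂ ↔ (C * η₂ + η₂ * Cᵀ = 0 ∧ C * θ₂ + θ₂ * Cᵀ = 0)) :
    (∀ A : Matrix (Fin k ⊕ Fin m) (Fin k ⊕ Fin m) ℝ,
      (A * η + η * Aᵀ = 0 ∧ A * θ + θ * Aᵀ = 0) →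
      ∃ (B : Matrix (Fin k) (Fin k) ℝ) (C : Matrix (Fin m) (Fin m) ℝ),
        A = Matrix.fromBlocks B 0 0 C ∧
        B * η₁ + η₁ * Bᵀ = 0 ∧
        C * η₂ + η₂ * Cᵀ = 0 ∧ C * θ₂ + θ₂ * Cᵀ = 0) ∧
    ∃ e : g ≃ₗ[ℝ] (g₁ × g₂), ∀ x y : g,
      (e ⁅x, y⁆).1 = ⁅(e x).1, (e y).1⁆ ∧ (e ⁅x, y⁆).2 = ⁅(e x).2, (e y).2⁆ := by

  have hdθ : IsUnit θ₂.det := (Matrix.isUnit_iff_isUnit_det _).mp hθ₂inv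
  have hdη₁ : IsUnit η₁.det := (Matrix.isUnit_iff_isUnit_det _).mp hη₁inv
  have key : ∀ A : Matrix (Fin k ⊕ Fin m) (Fin k ⊕ Fin m) ℝ,
      (A * η + η * Aᵀ = 0 ∧ A * θ + θ * Aᵀ = 0) →
      ∃ (B : Matrix (Fin k) (Fin k) ℝ) (C : Matrix (Fin m) (Fin m) ℝ),
        A = Matrix.fromBlocks B 0 0 C ∧
        B * η₁ + η₁ * Bᵀ = 0 ∧
        C * η₂ + η₂ * Cᵀ = 0 ∧ C * θ₂ + θ₂ * Cᵀ = 0 := by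
    intro A ⟨h1, h2⟩
    set a := A.toBlocks₁₁ with ha
    set b := A.toBlocks₁₂ with hb
    set c := A.toBlocks₂₁ with hc
    set d := A.toBlocks₂₂ with hd
    have hA : A = Matrix.fromBlocks a b c d := (Matrix.fromBlocks_toBlocks A).symm
    rw [hA] at h1 h2
    rw [hη] at h1
    rw [hθ] at h2
    simp only [Matrix.fromBlocks_multiply, Matrix.fromBlocks_transpose,
      Matrix.fromBlocks_add, Matrix.mul_zero, Matrix.zero_mul, add_zero, zero_add] at h1 h2
    have hb0 : b * θ₂ = 0 := by
      have := congrArg Matrix.toBlocks₁₂ h2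
      simpa using this
    have hbz : b = 0 := by
      calc b = b * θ₂ * θ₂⁻¹ := by
              rw [Matrix.mul_assoc, Matrix.mul_nonsing_inv _ hdθ, Matrix.mul_one]
        _ = 0 := by rw [hb0, Matrix.zero_mul]
    have hbc : b * η₂ + η₁ * cᵀ = 0 := by
      have := congrArg Matrix.toBlocks₁₂ h1
      simpa using this
    have hcz : c = 0 := by
      have h3 : η₁ * cᵀ = 0 := by simpa [hbz] using hbc
      have h4 : cᵀ = 0 := by
        calc cᵀ = η₁⁻¹ * (η₁ * cᵀ) := by
                rw [← Matrix.mul_assoc, Matrix.nonsing_inv_mul _ hdη₁, Matrix.one_mul]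
          _ = 0 := by rw [h3, Matrix.mul_zero]
      calc c = cᵀᵀ := (Matrix.transpose_transpose c).symm
        _ = 0 := by rw [h4, Matrix.transpose_zero]
    have haη : a * η₁ + η₁ * aᵀ = 0 := by
      have := congrArg Matrix.toBlocks₁₁ h1
      simpa using this
    have hdη : d * η₂ + η₂ * dᵀ = 0 := by
      have := congrArg Matrix.toBlocks₂₂ h1
      simpa using this
    have hdθ' : d * θ₂ + θ₂ * dᵀ = 0 := by
      have := congrArg Matrix.toBlocks₂₂ h2
      simpa using this
    exact ⟨a, d, by rw [hA, hbz, hcz], haη, hdη, hdθ'⟩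
  refine ⟨key, ?_⟩
  have memg : ∀ (B : Matrix (Fin k) (Fin k) ℝ) (C : Matrix (Fin m) (Fin m) ℝ),
      B ∈ g₁ → C ∈ g₂ → Matrix.fromBlocks B 0 0 C ∈ g := by
    intro B C hB hC
    rw [hg₁] at hB
    rw [hg₂] at hC
    rw [hg, hη, hθ]
    constructor
    · simp only [Matrix.fromBlocks_multiply, Matrix.fromBlocks_transpose,
        Matrix.fromBlocks_add, Matrix.mul_zero, Matrix.zero_mul, add_zero, zero_add,
        Matrix.transpose_zero, hB, hC.1]
      simp
    · simp only [Matrix.fromBlocks_multiply, Matrix.fromBlocks_transpose,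
        Matrix.fromBlocks_add, Matrix.mul_zero, Matrix.zero_mul, add_zero, zero_add,
        Matrix.transpose_zero, hC.2]
      simp
  have mem1 : ∀ x : g, (x : Matrix (Fin k ⊕ Fin m) (Fin k ⊕ Fin m) ℝ).toBlocks₁₁ ∈ g₁ := by
    intro x
    obtain ⟨B, C, hx, hB, -, -⟩ := key x ((hg x).mp x.2)
    rw [hg₁, hx]
    simpa using hB
  have mem2 : ∀ x : g, (x : Matrix (Fin k ⊕ Fin m) (Fin k ⊕ Fin m) ℝ).toBlocks₂₂ ∈ g₂ := by
    intro x
    obtain ⟨B, C, hx, -, hC1, hC2⟩ := key x ((hg x).mp x.2)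
    rw [hg₂, hx]
    constructor <;> simpa using (by assumption)
  refine ⟨{ toFun := fun x => (⟨(x : Matrix (Fin k ⊕ Fin m) (Fin k ⊕ Fin m) ℝ).toBlocks₁₁, mem1 x⟩,
                              ⟨(x : Matrix (Fin k ⊕ Fin m) (Fin k ⊕ Fin m) ℝ).toBlocks₂₂, mem2 x⟩),
            invFun := fun p => ⟨Matrix.fromBlocks (p.1 : Matrix _ _ ℝ) 0 0 (p.2 : Matrix _ _ ℝ),
                              memg _ _ p.1.2 p.2.2⟩,
            map_add' := ?_, map_smul' := ?_, left_inv := ?_, right_inv := ?_ }, ?_⟩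
  · intro x y
    exact Prod.ext (Subtype.ext rfl) (Subtype.ext rfl)
  · intro r x
    exact Prod.ext (Subtype.ext rfl) (Subtype.ext rfl)
  · intro x
    apply Subtype.ext
    obtain ⟨B, C, hx, -, -, -⟩ := key x ((hg x).mp x.2)
    simp only [hx]
    simp
  · intro p
    refine Prod.ext (Subtype.ext ?_) (Subtype.ext ?_) <;> simp
  · intro x y
    obtain ⟨B, C, hx, -, -, -⟩ := key x ((hg x).mp x.2)
    obtain ⟨B', C', hy, -, -, -⟩ := key y ((hg y).mp y.2)
    have hbr : ((⁅x, y⁆ : g) : Matrix (Fin k ⊕ Fin m) (Fin k ⊕ Fin m) ℝ)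
        = Matrix.fromBlocks (B * B' - B' * B) 0 0 (C * C' - C' * C) := by
      rw [LieSubalgebra.coe_bracket, Ring.lie_def, hx, hy]
      simp [Matrix.fromBlocks_multiply, fromBlocks_sub']
    constructor <;>
      · apply Subtype.ext
        simp only [LinearEquiv.coe_mk, LieSubalgebra.coe_bracket, Ring.lie_def, hbr, hx, hy]
        simp [Ring.lie_def, hx, hy, Matrix.fromBlocks_multiply, fromBlocks_sub']
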